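/- Let f, g, κ, τ, ρ : I → ℝ with f, g differentiable, satisfying f'(s) = ρ(s)(1 - f(s)²), κ(s) f(s) = τ(s) g(s), and g'(s) = -ρ(s) f(s) g(s) on an open interval I. Assume κ(s) > 0, g(s) > 0, and 1 - f(s)² > 0 for all s ∈ I, and fix s₀ ∈ I. Then there is a constant c > 0 such that τ(s)/κ(s) = (1/c) · f(s)/√(1 - f(s)²) for all s ∈ I. -/

import Mathlib

/-- Theorem 4.2: for an anti-torqued slant helix with θ = π/2 the ratio of
curvatures satisfies `τ/κ = (1/c) f/√(1-f²)` for a constant `c > 0`. -/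
theorem anti_torqued_slant_helix_ratio (a b : ℝ) (f g κ τ ρ : ℝ → ℝ)
    (hf : ∀ s ∈ Set.Ioo a b, HasDerivAt f (ρ s * (1 - f s ^ 2)) s)
    (hrel : ∀ s ∈ Set.Ioo a b, κ s * f s = τ s * g s)
    (hg : ∀ s ∈ Set.Ioo a b, HasDerivAt g (-(ρ s * f s * g s)) s)
    (hκ : ∀ s ∈ Set.Ioo a b, 0 < κ s)
    (hgI : ∀ s ∈ Set.Ioo a b, 0 < g s)
    (hfI : ∀ s ∈ Set.Ioo a b, 0 < 1 - f s ^ 2)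
    (s₀ : ℝ) (hs₀ : s₀ ∈ Set.Ioo a b) :
    ∃ c : ℝ, 0 < c ∧ ∀ s ∈ Set.Ioo a b,
      τ s / κ s = (1 / c) * (f s / Real.sqrt (1 - f s ^ 2)) := by
  set h : ℝ → ℝ := fun s => g s ^ 2 / (1 - f s ^ 2) with hh
  have hderiv : ∀ s ∈ Set.Ioo a b, HasDerivAt h 0 s := by
    intro s hs
    have hD : (1 - f s ^ 2) ≠ 0 := ne_of_gt (hfI s hs)
    have h1 : HasDerivAt (fun s => g s ^ 2) (2 * g s * -(ρ s * f s * g s)) s := by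
      have := (hg s hs).fun_pow 2
      simpa [mul_comm, mul_assoc, mul_left_comm] using this
    have h2 : HasDerivAt (fun s => 1 - f s ^ 2) (-(2 * f s * (ρ s * (1 - f s ^ 2)))) s := by
      have := ((hf s hs).pow 2).const_sub 1
      simpa [mul_comm, mul_assoc, mul_left_comm] using this
    have := h1.fun_div h2 hD
    refine this.congr_deriv ?_
    rw [div_eq_zero_iff]; left
    ring
  have hconst : ∀ s ∈ Set.Ioo a b, h s = h s₀ := by
    intro s hs
    have hdiff : DifferentiableOn ℝ h (Set.Ioo a b) :=
      fun x hx => ((hderiv x hx).differentiableAt).differentiableWithinAt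
    have := Convex.is_const_of_fderivWithin_eq_zero (convex_Ioo a b) hdiff
      (fun x hx => by
        rw [fderivWithin_eq_fderiv ((isOpen_Ioo).uniqueDiffOn x hx)
          ((hderiv x hx).differentiableAt)]
        ext
        simp [(hderiv x hx).deriv, ← toSpanSingleton_deriv, (hderiv x hx).differentiableAt]) hs hs₀
    exact this
  set c : ℝ := g s₀ / Real.sqrt (1 - f s₀ ^ 2) with hc
  have hcpos : 0 < c := div_pos (hgI s₀ hs₀) (Real.sqrt_pos.2 (hfI s₀ hs₀))
  refine ⟨c, hcpos, fun s hs => ?_⟩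
  have hDs : 0 < 1 - f s ^ 2 := hfI s hs
  have hgs : 0 < g s := hgI s hs
  have hsq : Real.sqrt (1 - f s ^ 2) ^ 2 = 1 - f s ^ 2 := Real.sq_sqrt hDs.le
  have hsq₀ : Real.sqrt (1 - f s₀ ^ 2) ^ 2 = 1 - f s₀ ^ 2 := Real.sq_sqrt (hfI s₀ hs₀).le
  have hgc : g s = c * Real.sqrt (1 - f s ^ 2) := by
    have hhs : g s ^ 2 / (1 - f s ^ 2) = g s₀ ^ 2 / (1 - f s₀ ^ 2) := hconst s hs
    have hcsq : c ^ 2 = g s₀ ^ 2 / (1 - f s₀ ^ 2) := by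
      rw [hc, div_pow, hsq₀]
    have h1 : g s ^ 2 = (c * Real.sqrt (1 - f s ^ 2)) ^ 2 := by
      rw [mul_pow, hsq, hcsq, ← hhs]
      field_simp
    have h2 : 0 ≤ c * Real.sqrt (1 - f s ^ 2) :=
      mul_nonneg hcpos.le (Real.sqrt_nonneg _)
    nlinarith [sq_nonneg (g s - c * Real.sqrt (1 - f s ^ 2)),
      sq_nonneg (g s + c * Real.sqrt (1 - f s ^ 2))]
  have hτ : τ s = κ s * f s / g s := by
    field_simp
    linarith [hrel s hs]
  rw [hτ, hgc]
  have hκs := hκ s hs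
  have hsqrt : 0 < Real.sqrt (1 - f s ^ 2) := Real.sqrt_pos.2 hDs
  field_simp
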